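/- arXiv:1001.1017 — 5 statements merged into one kernel-verified Lean document; each statement's English description precedes it below -/
import Mathlib

section
/- For natural numbers a, b, if a > φ·b and b > 0, then a − b < a, b ≤ a, and b < φ·(a − b) (so the total number of cards strictly decreases and the lemma hypothesis is preserved), where φ = (1+√5)/2. -/
theorem nat_induction_step (a b : ℕ) (h : (a : ℝ) > (1 + Real.sqrt 5) / 2 * b) (hb : 0 < b) :
    a - b < a ∧ b ≤ a ∧ (b : ℝ) < (1 + Real.sqrt 5) / 2 * ((a - b : ℕ) : ℝ) := by
  have hs : Real.sqrt 5 ^ 2 = 5 := Real.sq_sqrt (by norm_num)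
  have hs1 : (1 : ℝ) < Real.sqrt 5 := by nlinarith [Real.sqrt_nonneg 5]
  have hbR : (0 : ℝ) < b := by exact_mod_cast hb
  have hba : (b : ℝ) < a := by nlinarith
  have hle : b ≤ a := by exact_mod_cast hba.le
  refine ⟨Nat.sub_lt (lt_of_lt_of_le hb hle) hb, hle, ?_⟩
  have hcast : ((a - b : ℕ) : ℝ) = (a : ℝ) - b := by
    push_cast [Nat.cast_sub hle]; ring
  rw [hcast]
  nlinarith
end

section
/- In the formal model of Peer Pressure, if Alice's hand A and Bob's hand B satisfy |A| > φ·|B| (φ the golden ratio), then Alice has a winning strategy. -/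
/-- `AliceWins A B` : in the game Peer Pressure with Alice holding the hand `A`
and Bob holding the hand `B` (disjoint finite sets of integers), Alice has a
(pure) winning strategy.  In each round both players simultaneously play a card;
the higher card is discarded and the lower card is passed to the player of the
higher card; a player with no cards left loses. -/
inductive AliceWins : Finset ℤ → Finset ℤ → Prop
  | base {A : Finset ℤ} (hA : A.Nonempty) : AliceWins A ∅
  | step {A B : Finset ℤ} (hB : B.Nonempty) (a : ℤ) (ha : a ∈ A)
      (h : ∀ b ∈ B,
        AliceWins (if b < a then insert b (A.erase a) else A.erase a)
                  (if b < a then B.erase b else insert a (B.erase b))) :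
      AliceWins A B

noncomputable def ph : ℝ := (1 + Real.sqrt 5) / 2

lemma sqrt5_sq : Real.sqrt 5 * Real.sqrt 5 = 5 := by
  exact Real.mul_self_sqrt (by norm_num)

lemma ph_gt_one : 1 < ph := by
  have h5 := sqrt5_sq
  have hnn := Real.sqrt_nonneg 5
  unfold ph
  nlinarith

lemma ph_pos : 0 < ph := lt_trans one_pos ph_gt_one

lemma ph_sq : ph * ph = ph + 1 := by
  have h5 := sqrt5_sq
  unfold ph
  nlinarith

/-- the "forced ducks" count δ = max(s - ℓ, 0) as a real. -/
noncomputable def dlt (s l : ℕ) : ℝ := max ((s : ℝ) - (l : ℝ)) 0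

/-- The key invariant on counts: `c` chaff cards, `d` dead Bob cards, `s` top cards
(including the threshold card), `l` live Bob cards. -/
noncomputable def Q (c d s l : ℕ) : Prop :=
  ph * ((d : ℝ) + (l : ℝ) - dlt s l) < (c : ℝ) + dlt s l

lemma Q_beat {c d s₂ l d₂ l₂ : ℕ} (hQ : Q c d (s₂ + 1) l)
    (hl : l₂ + 1 ≤ l) (hn : d₂ + l₂ = d + l) : Q c d₂ s₂ l₂ := by
  unfold Q at *
  have hph := ph_pos
  have hδ : dlt (s₂ + 1) l ≤ dlt s₂ l₂ := by
    unfold dlt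
    apply max_le_max _ le_rfl
    have : (l₂ : ℝ) + 1 ≤ l := by exact_mod_cast hl
    push_cast
    linarith
  have hn' : (d₂ : ℝ) + (l₂ : ℝ) = (d : ℝ) + (l : ℝ) := by exact_mod_cast hn
  nlinarith [mul_le_mul_of_nonneg_left hδ (le_of_lt hph)]

lemma Q_duck {c d s₂ l d₂ l₂ : ℕ} (hQ : Q c d (s₂ + 1) l)
    (hl : l₂ ≤ l) (hn : d₂ + l₂ + 1 = d + l) : Q (c + 1) d₂ s₂ l₂ := by
  unfold Q at *
  have hph := ph_pos
  have hδ : dlt (s₂ + 1) l ≤ dlt s₂ l₂ + 1 := by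
    unfold dlt
    have h1 : (l₂ : ℝ) ≤ l := by exact_mod_cast hl
    calc max ((↑(s₂ + 1) : ℝ) - l) 0 ≤ max (((s₂ : ℝ) - l₂) + 1) (0 + 1) := by
          apply max_le_max _ (by norm_num)
          push_cast; linarith
      _ = max ((s₂ : ℝ) - l₂) 0 + 1 := by rw [max_add_add_right]
  have hn' : (d₂ : ℝ) + (l₂ : ℝ) + 1 = (d : ℝ) + (l : ℝ) := by exact_mod_cast hn
  push_cast
  nlinarith [mul_le_mul_of_nonneg_left hδ (le_of_lt hph)]

lemma Q_entry {d l m : ℕ} (h : ph * ((d : ℝ) + (l : ℝ)) < m) : Q 0 d m l := by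
  have hph := ph_pos
  have hph1 := ph_gt_one
  have hsq := ph_sq
  have hd0 : (0:ℝ) ≤ (d:ℝ) := Nat.cast_nonneg d
  have hl0 : (0:ℝ) ≤ (l:ℝ) := Nat.cast_nonneg l
  have hlm : (l : ℝ) < m := by nlinarith
  unfold Q
  have hδ : dlt m l = (m : ℝ) - l := max_eq_left (by linarith)
  rw [hδ]
  nlinarith [mul_lt_mul_of_pos_left h (by linarith : (0:ℝ) < 1 + ph)]

lemma Q_one_beat {c d l : ℕ} (hQ : Q c d 1 l) (hl : 1 ≤ l) :
    ph * ((d : ℝ) + (l : ℝ)) < c := by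
  unfold Q at hQ
  have hδ : dlt 1 l = 0 := by
    unfold dlt
    apply max_eq_right
    have : (1 : ℝ) ≤ (l : ℝ) := by exact_mod_cast hl
    push_cast; linarith
  rw [hδ] at hQ
  linarith

lemma Q_one_duck {c d l : ℕ} (hQ : Q c d 1 l) :
    ph * ((d : ℝ) + (l : ℝ) - 1) < (c : ℝ) + 1 := by
  have hph := ph_pos
  have hph1 := ph_gt_one
  rcases Nat.eq_zero_or_pos l with h0 | h1
  · subst h0
    unfold Q at hQ
    have hδ : dlt 1 0 = 1 := by unfold dlt; simp
    rw [hδ] at hQ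
    push_cast at hQ ⊢
    linarith
  · have := Q_one_beat hQ h1
    nlinarith

/-- The structural invariant on positions. -/
def GoodPos (A B : Finset ℤ) : Prop :=
  ∃ t ∈ A, Q ((A.filter (· < t)).card) ((B.filter (· < t)).card)
      ((A.filter (t < ·)).card + 1) ((B.filter (t < ·)).card)

lemma partition_card {C : Finset ℤ} {t : ℤ} (ht : t ∉ C) :
    (C.filter (· < t)).card + (C.filter (t < ·)).card = C.card := by
  rw [← Finset.card_union_of_disjoint]
  · congr 1
    ext x
    simp only [Finset.mem_union, Finset.mem_filter]
    constructor
    · rintro (⟨hx, _⟩ | ⟨hx, _⟩) <;> exact hx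
    · intro hx
      rcases lt_trichotomy x t with h | h | h
      · exact Or.inl ⟨hx, h⟩
      · exact absurd (h ▸ hx) ht
      · exact Or.inr ⟨hx, h⟩
  · rw [Finset.disjoint_left]
    rintro x hx1 hx2
    rw [Finset.mem_filter] at hx1 hx2
    exact absurd (lt_trans hx1.2 hx2.2) (lt_irrefl x)

/-- Entry: a large-enough hand satisfies the invariant. -/
lemma entry {A B : Finset ℤ} (hd : Disjoint A B) (hA : A.Nonempty)
    (h : ph * (B.card : ℝ) < A.card) : GoodPos A B := by
  set t := A.min' hA with htdef
  have ht : t ∈ A := A.min'_mem hA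
  refine ⟨t, ht, ?_⟩
  have hc : A.filter (· < t) = ∅ := by
    apply Finset.filter_eq_empty_iff.mpr
    intro x hx
    exact not_lt.mpr (A.min'_le x hx)
  have hs : A.filter (t < ·) = A.erase t := by
    ext x
    simp only [Finset.mem_filter, Finset.mem_erase]
    constructor
    · rintro ⟨hx, hlt⟩; exact ⟨ne_of_gt hlt, hx⟩
    · rintro ⟨hne, hx⟩
      exact ⟨hx, lt_of_le_of_ne (A.min'_le x hx) (Ne.symm hne)⟩
  have htB : t ∉ B := fun hB => (Finset.disjoint_left.mp hd ht) hB
  have hpart := partition_card (C := B) (t := t) htB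
  rw [hc, hs, Finset.card_empty, Finset.card_erase_add_one ht]
  apply Q_entry
  have hcast : ((B.filter (· < t)).card : ℝ) + ((B.filter (t < ·)).card : ℝ)
      = (B.card : ℝ) := by exact_mod_cast hpart
  rw [hcast]
  exact h

lemma inv_wins : ∀ N A B, A.card + B.card ≤ N → Disjoint A B → GoodPos A B → AliceWins A B := by
  intro N
  induction N with
  | zero =>
    intro A B hN _ hGood
    obtain ⟨t, ht, _⟩ := hGood
    have : A.card ≠ 0 := Finset.card_ne_zero_of_mem ht
    omega
  | succ N ih =>
    intro A B hN hd hGood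
    obtain ⟨t, ht, hQ⟩ := hGood
    rcases B.eq_empty_or_nonempty with hBe | hBne
    · exact hBe ▸ AliceWins.base ⟨t, ht⟩
    refine AliceWins.step hBne t ht ?_
    intro b hb
    have hbt : b ≠ t := fun h => (Finset.disjoint_right.mp hd hb) (h ▸ ht)
    have hbA : b ∉ A := Finset.disjoint_right.mp hd hb
    have htB : t ∉ B := Finset.disjoint_left.mp hd ht
    have hBpos : 1 ≤ B.card := Finset.card_pos.mpr hBne
    have hApos : 1 ≤ A.card := Finset.card_pos.mpr ⟨t, ht⟩
    have hnB : (B.filter (· < t)).card + (B.filter (t < ·)).card = B.card :=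
      partition_card htB
    have htE : t ∉ A.erase t := Finset.notMem_erase t A
    have hAfe : A.filter (· < t) = (A.erase t).filter (· < t) := by
      ext x
      simp only [Finset.mem_filter, Finset.mem_erase]
      constructor
      · rintro ⟨hx, hlt⟩; exact ⟨⟨ne_of_lt hlt, hx⟩, hlt⟩
      · rintro ⟨⟨_, hx⟩, hlt⟩; exact ⟨hx, hlt⟩
    have hAfe2 : A.filter (t < ·) = (A.erase t).filter (t < ·) := by
      ext x
      simp only [Finset.mem_filter, Finset.mem_erase]
      constructor
      · rintro ⟨hx, hlt⟩; exact ⟨⟨ne_of_gt hlt, hx⟩, hlt⟩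
      · rintro ⟨⟨_, hx⟩, hlt⟩; exact ⟨hx, hlt⟩
    have hmA : (A.filter (· < t)).card + (A.filter (t < ·)).card + 1 = A.card := by
      rw [hAfe, hAfe2, partition_card htE, Finset.card_erase_add_one ht]
    rcases lt_or_gt_of_ne hbt with hblt | hbgt
    · -- DUCK : b < t
      rw [if_pos hblt, if_pos hblt]
      set A₂ := insert b (A.erase t) with hA₂
      set B₂ := B.erase b with hB₂
      have hbE : b ∉ A.erase t := fun h => hbA (Finset.mem_of_mem_erase h)
      have hA₂card : A₂.card = A.card := by
        rw [hA₂, Finset.card_insert_of_notMem hbE, Finset.card_erase_add_one ht]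
      have hB₂card : B₂.card + 1 = B.card := Finset.card_erase_add_one hb
      have hd₂ : Disjoint A₂ B₂ := by
        rw [Finset.disjoint_left]
        intro x hx hx2
        rcases Finset.mem_insert.mp hx with h | h
        · exact (Finset.notMem_erase b B) (by rwa [h] at hx2)
        · exact (Finset.disjoint_left.mp hd (Finset.mem_of_mem_erase h))
            (Finset.mem_of_mem_erase hx2)
      have hNle : A₂.card + B₂.card ≤ N := by omega
      apply ih A₂ B₂ hNle hd₂
      rcases (A.filter (t < ·)).eq_empty_or_nonempty with hX | hX
      · -- t was Alice's maximum : restart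
        apply entry hd₂ ⟨b, Finset.mem_insert_self b _⟩
        have hs0 : (A.filter (t < ·)).card = 0 := by rw [hX]; exact Finset.card_empty
        have hq := Q_one_duck (hs0 ▸ hQ)
        have hc : ((A.filter (· < t)).card : ℝ) + 1 = A.card := by
          exact_mod_cast (by omega : (A.filter (· < t)).card + 1 = A.card)
        have hn' : ((B.filter (· < t)).card : ℝ) + ((B.filter (t < ·)).card : ℝ)
            = B.card := by exact_mod_cast hnB
        have hb2 : (B₂.card : ℝ) = (B.card : ℝ) - 1 := by
          have : (B₂.card : ℝ) + 1 = B.card := by exact_mod_cast hB₂card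
          linarith
        rw [hb2, hA₂card]
        calc ph * ((B.card : ℝ) - 1)
            = ph * (((B.filter (· < t)).card : ℝ) + ((B.filter (t < ·)).card : ℝ) - 1) := by
              rw [hn']
          _ < ((A.filter (· < t)).card : ℝ) + 1 := hq
          _ = (A.card : ℝ) := hc
      · -- there is a next top card t₂
        set t₂ := (A.filter (t < ·)).min' hX with ht₂def
        have ht₂X := (A.filter (t < ·)).min'_mem hX
        rw [Finset.mem_filter] at ht₂X
        obtain ⟨ht₂A, htt₂⟩ := ht₂X
        have Hmin : ∀ x ∈ A, t < x → t₂ ≤ x := fun x hx hlt =>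
          (A.filter (t < ·)).min'_le x (Finset.mem_filter.mpr ⟨hx, hlt⟩)
        have ht₂A₂ : t₂ ∈ A₂ :=
          Finset.mem_insert_of_mem (Finset.mem_erase.mpr ⟨ne_of_gt htt₂, ht₂A⟩)
        refine ⟨t₂, ht₂A₂, ?_⟩
        have E1 : A₂.filter (· < t₂) = insert b (A.filter (· < t)) := by
          ext x
          simp only [hA₂, Finset.mem_filter, Finset.mem_insert, Finset.mem_erase]
          constructor
          · rintro ⟨hx | ⟨hxt, hxA⟩, hlt⟩
            · exact Or.inl hx
            · refine Or.inr ⟨hxA, ?_⟩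
              rcases lt_or_gt_of_ne hxt with h | h
              · exact h
              · exact absurd (Hmin x hxA h) (not_le.mpr hlt)
          · rintro (rfl | ⟨hxA, hlt⟩)
            · exact ⟨Or.inl rfl, lt_trans hblt htt₂⟩
            · exact ⟨Or.inr ⟨ne_of_lt hlt, hxA⟩, lt_trans hlt htt₂⟩
        have E2 : A₂.filter (t₂ < ·) = A.filter (t₂ < ·) := by
          ext x
          simp only [hA₂, Finset.mem_filter, Finset.mem_insert, Finset.mem_erase]
          constructor
          · rintro ⟨hx | ⟨_, hxA⟩, hlt⟩
            · exact absurd (by rwa [hx] at hlt : t₂ < b) (not_lt.mpr (le_of_lt (lt_trans hblt htt₂)))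
            · exact ⟨hxA, hlt⟩
          · rintro ⟨hxA, hlt⟩
            exact ⟨Or.inr ⟨ne_of_gt (lt_trans htt₂ hlt), hxA⟩, hlt⟩
        have E3 : A.filter (t < ·) = insert t₂ (A.filter (t₂ < ·)) := by
          ext x
          simp only [Finset.mem_filter, Finset.mem_insert]
          constructor
          · rintro ⟨hxA, hlt⟩
            rcases eq_or_lt_of_le (Hmin x hxA hlt) with h | h
            · exact Or.inl h.symm
            · exact Or.inr ⟨hxA, h⟩
          · rintro (rfl | ⟨hxA, hlt⟩)
            · exact ⟨ht₂A, htt₂⟩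
            · exact ⟨hxA, lt_trans htt₂ hlt⟩
        have hs : (A.filter (t < ·)).card = (A.filter (t₂ < ·)).card + 1 := by
          rw [E3, Finset.card_insert_of_notMem]
          simp only [Finset.mem_filter]
          rintro ⟨_, h⟩; exact lt_irrefl t₂ h
        have hc2 : (A₂.filter (· < t₂)).card = (A.filter (· < t)).card + 1 := by
          rw [E1, Finset.card_insert_of_notMem]
          intro h; exact hbA (Finset.mem_of_mem_filter b h)
        have hl2 : (B₂.filter (t₂ < ·)).card ≤ (B.filter (t < ·)).card := by
          apply Finset.card_le_card
          intro x hx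
          rw [Finset.mem_filter] at hx ⊢
          exact ⟨Finset.mem_of_mem_erase hx.1, lt_trans htt₂ hx.2⟩
        have ht₂B₂ : t₂ ∉ B₂ := fun h =>
          (Finset.disjoint_left.mp hd ht₂A) (Finset.mem_of_mem_erase h)
        have hnB₂ : (B₂.filter (· < t₂)).card + (B₂.filter (t₂ < ·)).card = B₂.card :=
          partition_card ht₂B₂
        have hn2 : (B₂.filter (· < t₂)).card + (B₂.filter (t₂ < ·)).card + 1
            = (B.filter (· < t)).card + (B.filter (t < ·)).card := by omega
        rw [hc2, E2]
        rw [hs] at hQ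
        exact Q_duck hQ hl2 hn2
    · -- BEAT : t < b
      rw [if_neg (not_lt.mpr (le_of_lt hbgt)), if_neg (not_lt.mpr (le_of_lt hbgt))]
      set A₂ := A.erase t with hA₂
      set B₂ := insert t (B.erase b) with hB₂
      have hbl : b ∈ B.filter (t < ·) := Finset.mem_filter.mpr ⟨hb, hbgt⟩
      have hl1 : 1 ≤ (B.filter (t < ·)).card := Finset.card_pos.mpr ⟨b, hbl⟩
      have htBe : t ∉ B.erase b := fun h => htB (Finset.mem_of_mem_erase h)
      have hA₂card : A₂.card + 1 = A.card := Finset.card_erase_add_one ht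
      have hB₂card : B₂.card = B.card := by
        rw [hB₂, Finset.card_insert_of_notMem htBe, Finset.card_erase_add_one hb]
      have hd₂ : Disjoint A₂ B₂ := by
        rw [Finset.disjoint_left]
        intro x hx hx2
        rcases Finset.mem_insert.mp hx2 with h | h
        · exact (Finset.notMem_erase t A) (by rwa [h] at hx)
        · exact (Finset.disjoint_left.mp hd (Finset.mem_of_mem_erase hx))
            (Finset.mem_of_mem_erase h)
      have hNle : A₂.card + B₂.card ≤ N := by omega
      apply ih A₂ B₂ hNle hd₂
      rcases (A.filter (t < ·)).eq_empty_or_nonempty with hX | hX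
      · -- t was Alice's maximum : restart
        have hs0 : (A.filter (t < ·)).card = 0 := by rw [hX]; exact Finset.card_empty
        have hq := Q_one_beat (hs0 ▸ hQ) hl1
        have hn' : ((B.filter (· < t)).card : ℝ) + ((B.filter (t < ·)).card : ℝ)
            = B.card := by exact_mod_cast hnB
        rw [hn'] at hq
        have hcA : (A₂.card : ℝ) = ((A.filter (· < t)).card : ℝ) := by
          exact_mod_cast (by omega : A₂.card = (A.filter (· < t)).card)
        have hA₂ne : A₂.Nonempty := by
          rw [← Finset.card_pos]
          have hphB : (0:ℝ) < ph * B.card := by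
            apply mul_pos ph_pos
            exact_mod_cast hBpos
          have : (0:ℝ) < (A₂.card : ℝ) := by rw [hcA]; linarith
          exact_mod_cast this
        apply entry hd₂ hA₂ne
        rw [hB₂card, hcA]
        exact hq
      · set t₂ := (A.filter (t < ·)).min' hX with ht₂def
        have ht₂X := (A.filter (t < ·)).min'_mem hX
        rw [Finset.mem_filter] at ht₂X
        obtain ⟨ht₂A, htt₂⟩ := ht₂X
        have Hmin : ∀ x ∈ A, t < x → t₂ ≤ x := fun x hx hlt =>
          (A.filter (t < ·)).min'_le x (Finset.mem_filter.mpr ⟨hx, hlt⟩)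
        have ht₂A₂ : t₂ ∈ A₂ := Finset.mem_erase.mpr ⟨ne_of_gt htt₂, ht₂A⟩
        refine ⟨t₂, ht₂A₂, ?_⟩
        have E1 : A₂.filter (· < t₂) = A.filter (· < t) := by
          ext x
          simp only [hA₂, Finset.mem_filter, Finset.mem_erase]
          constructor
          · rintro ⟨⟨hxt, hxA⟩, hlt⟩
            refine ⟨hxA, ?_⟩
            rcases lt_or_gt_of_ne hxt with h | h
            · exact h
            · exact absurd (Hmin x hxA h) (not_le.mpr hlt)
          · rintro ⟨hxA, hlt⟩
            exact ⟨⟨ne_of_lt hlt, hxA⟩, lt_trans hlt htt₂⟩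
        have E2 : A₂.filter (t₂ < ·) = A.filter (t₂ < ·) := by
          ext x
          simp only [hA₂, Finset.mem_filter, Finset.mem_erase]
          constructor
          · rintro ⟨⟨_, hxA⟩, hlt⟩; exact ⟨hxA, hlt⟩
          · rintro ⟨hxA, hlt⟩
            exact ⟨⟨ne_of_gt (lt_trans htt₂ hlt), hxA⟩, hlt⟩
        have E3 : A.filter (t < ·) = insert t₂ (A.filter (t₂ < ·)) := by
          ext x
          simp only [Finset.mem_filter, Finset.mem_insert]
          constructor
          · rintro ⟨hxA, hlt⟩
            rcases eq_or_lt_of_le (Hmin x hxA hlt) with h | h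
            · exact Or.inl h.symm
            · exact Or.inr ⟨hxA, h⟩
          · rintro (rfl | ⟨hxA, hlt⟩)
            · exact ⟨ht₂A, htt₂⟩
            · exact ⟨hxA, lt_trans htt₂ hlt⟩
        have hs : (A.filter (t < ·)).card = (A.filter (t₂ < ·)).card + 1 := by
          rw [E3, Finset.card_insert_of_notMem]
          simp only [Finset.mem_filter]
          rintro ⟨_, h⟩; exact lt_irrefl t₂ h
        have hl2 : (B₂.filter (t₂ < ·)).card + 1 ≤ (B.filter (t < ·)).card := by
          have hsub : B₂.filter (t₂ < ·) ⊆ (B.filter (t < ·)).erase b := by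
            intro x hx
            rw [Finset.mem_filter] at hx
            obtain ⟨hx1, hx2⟩ := hx
            rcases Finset.mem_insert.mp hx1 with h | h
            · exfalso
              rw [h] at hx2
              exact absurd (lt_trans htt₂ hx2) (lt_irrefl t)
            · refine Finset.mem_erase.mpr ⟨Finset.mem_erase.mp h |>.1, ?_⟩
              exact Finset.mem_filter.mpr ⟨Finset.mem_of_mem_erase h, lt_trans htt₂ hx2⟩
          have := Finset.card_le_card hsub
          rw [Finset.card_erase_of_mem hbl] at this
          omega
        have ht₂B₂ : t₂ ∉ B₂ := by
          intro h
          rcases Finset.mem_insert.mp h with h | h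
          · exact absurd h (ne_of_gt htt₂)
          · exact (Finset.disjoint_left.mp hd ht₂A) (Finset.mem_of_mem_erase h)
        have hnB₂ : (B₂.filter (· < t₂)).card + (B₂.filter (t₂ < ·)).card = B₂.card :=
          partition_card ht₂B₂
        have hn2 : (B₂.filter (· < t₂)).card + (B₂.filter (t₂ < ·)).card
            = (B.filter (· < t)).card + (B.filter (t < ·)).card := by omega
        rw [E1, E2]
        rw [hs] at hQ
        exact Q_beat hQ hl2 hn2


theorem main_lemma_many_cards (A B : Finset ℤ) (hdisj : Disjoint A B)
    (h : (A.card : ℝ) > (1 + Real.sqrt 5) / 2 * B.card) :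
    AliceWins A B := by
  have hnn : (0:ℝ) ≤ (1 + Real.sqrt 5) / 2 * B.card := by
    apply mul_nonneg _ (Nat.cast_nonneg _)
    have := Real.sqrt_nonneg 5
    linarith
  have hA : A.Nonempty := by
    rw [← Finset.card_pos]
    have : (0:ℝ) < (A.card : ℝ) := lt_of_le_of_lt hnn h
    exact_mod_cast this
  exact inv_wins (A.card + B.card) A B le_rfl hdisj
    (entry hdisj hA (by unfold ph; exact h))
end

section
/- In the formal model of Peer Pressure, if every card in Alice's hand A is higher than every card in Bob's hand B, and |B| < φ·|A| (φ the golden ratio), then Alice has a winning strategy. -/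
noncomputable def phiR : ℝ := (1 + Real.sqrt 5) / 2

lemma sqrt5_gt : (2:ℝ) < Real.sqrt 5 := by
  have : (2:ℝ) = Real.sqrt 4 := by
    rw [show (4:ℝ) = 2^2 by norm_num, Real.sqrt_sq]; norm_num
  rw [this]; exact Real.sqrt_lt_sqrt (by norm_num) (by norm_num)

lemma phiR_gt_one : 1 < phiR := by have := sqrt5_gt; unfold phiR; linarith

lemma phiR_sq : phiR * phiR = phiR + 1 := by
  have h5 : Real.sqrt 5 * Real.sqrt 5 = 5 := Real.mul_self_sqrt (by norm_num)
  unfold phiR; nlinarith [h5]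

def goodA (A B : Finset ℤ) : Prop :=
  (B.card : ℝ) + (A.card : ℝ) - ((A.filter fun x => ∀ c ∈ B, c < x).card : ℝ)
    < phiR * (A.card : ℝ)

def goodB (A B : Finset ℤ) : Prop :=
  ∃ t : ℤ, phiR * ((B.card : ℝ) + ((A.filter fun x => x ≤ t).card : ℝ)) <
    (A.card : ℝ) + ((A.filter fun x => x ≤ t).card : ℝ) + ((B.filter fun c => c ≤ t).card : ℝ)


theorem key : ∀ (N : ℕ) (A B : Finset ℤ), A.card + B.card ≤ N → Disjoint A B →
    A.Nonempty → (goodA A B ∨ goodB A B) → AliceWins A B := by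
  intro N
  induction N with
  | zero =>
    intro A B hN _ hAne _
    exfalso; have := Finset.card_pos.mpr hAne; omega
  | succ N IH =>
    intro A B hN hdisj hAne hgood
    rcases B.eq_empty_or_nonempty with hBe | hBne
    · subst hBe; exact AliceWins.base hAne
    have hφ1 : (1:ℝ) < phiR := phiR_gt_one
    have hφsq : phiR * phiR = phiR + 1 := phiR_sq
    have hA1 : 1 ≤ A.card := Finset.card_pos.mpr hAne
    have hB1 : 1 ≤ B.card := Finset.card_pos.mpr hBne
    by_cases hGA : goodA A B
    · -- CASE A
      set H := A.filter (fun x => ∀ c ∈ B, c < x) with hHdef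
      by_cases hHne : H.Nonempty
      · -- Case 1a : play the minimal "high" card
        set x := H.min' hHne with hxdef
        have hxH : x ∈ H := Finset.min'_mem _ _
        have hxA : x ∈ A := (Finset.mem_filter.mp hxH).1
        have hxgt : ∀ c ∈ B, c < x := (Finset.mem_filter.mp hxH).2
        refine AliceWins.step hBne x hxA (fun c hc => ?_)
        have hcx : c < x := hxgt c hc
        rw [if_pos hcx, if_pos hcx]
        have hcA : c ∉ A := Finset.disjoint_right.mp hdisj hc
        have hcA' : c ∉ A.erase x := fun hm => hcA (Finset.mem_of_mem_erase hm)
        have hAcard : (insert c (A.erase x)).card = A.card := by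
          rw [Finset.card_insert_of_notMem hcA', Finset.card_erase_of_mem hxA]; omega
        have hBcard : (B.erase c).card = B.card - 1 := Finset.card_erase_of_mem hc
        rcases (B.erase c).eq_empty_or_nonempty with hB'e | hB'ne
        · rw [hB'e]; exact AliceWins.base (Finset.insert_nonempty _ _)
        · refine IH _ _ (by omega) ?_ (Finset.insert_nonempty _ _) (Or.inl ?_)
          · rw [Finset.disjoint_right]
            intro u hu
            have huB : u ∈ B := Finset.mem_of_mem_erase hu
            have hune : u ≠ c := Finset.ne_of_mem_erase hu
            simp only [Finset.mem_insert, Finset.mem_erase]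
            push_neg
            exact ⟨hune, fun _ => Finset.disjoint_right.mp hdisj huB⟩
          · -- goodA for the child
            set H' := (insert c (A.erase x)).filter
              (fun y => ∀ c' ∈ B.erase c, c' < y) with hH'def
            have hsub : H.erase x ⊆ H' := by
              intro y hy
              have hyx : y ≠ x := Finset.ne_of_mem_erase hy
              have hyH : y ∈ H := Finset.mem_of_mem_erase hy
              have hyA : y ∈ A := (Finset.mem_filter.mp hyH).1
              have hyp : ∀ c' ∈ B, c' < y := (Finset.mem_filter.mp hyH).2
              refine Finset.mem_filter.mpr ⟨?_, ?_⟩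
              · exact Finset.mem_insert_of_mem (Finset.mem_erase.mpr ⟨hyx, hyA⟩)
              · exact fun c' hc' => hyp c' (Finset.mem_of_mem_erase hc')
            have hcard' : H.card ≤ H'.card + 1 := by
              have := Finset.card_le_card hsub
              rw [Finset.card_erase_of_mem hxH] at this
              omega
            unfold goodA at hGA ⊢
            rw [hAcard, hBcard]
            rw [← hH'def]
            have hcast1 : ((B.card - 1 : ℕ) : ℝ) = (B.card : ℝ) - 1 := by
              push_cast [Nat.cast_sub hB1]; ring
            rw [hcast1]
            have hc2 : (H.card : ℝ) ≤ (H'.card : ℝ) + 1 := by exact_mod_cast hcard'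
            linarith [hGA]
      · -- Case 1b : no high card, play the global minimum of A
        have hH0 : H.card = 0 := by
          rw [Finset.card_eq_zero]; exact Finset.not_nonempty_iff_eq_empty.mp hHne
        have hq : (B.card : ℝ) + (A.card : ℝ) < phiR * A.card := by
          unfold goodA at hGA; rw [hH0] at hGA; simpa using hGA
        have hq2 : phiR * (B.card : ℝ) < (A.card : ℝ) := by
          nlinarith [hq, hφsq, hφ1, (by positivity : (0:ℝ) ≤ (B.card:ℝ))]
        set x := A.min' hAne with hxdef
        have hxA : x ∈ A := Finset.min'_mem _ _
        refine AliceWins.step hBne x hxA (fun c hc => ?_)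
        have hcA : c ∉ A := Finset.disjoint_right.mp hdisj hc
        have hcx : c ≠ x := fun h => hcA (h ▸ hxA)
        by_cases hlt : c < x
        · rw [if_pos hlt, if_pos hlt]
          have hcA' : c ∉ A.erase x := fun hm => hcA (Finset.mem_of_mem_erase hm)
          have hAcard : (insert c (A.erase x)).card = A.card := by
            rw [Finset.card_insert_of_notMem hcA', Finset.card_erase_of_mem hxA]; omega
          have hBcard : (B.erase c).card = B.card - 1 := Finset.card_erase_of_mem hc
          rcases (B.erase c).eq_empty_or_nonempty with hB'e | hB'ne
          · rw [hB'e]; exact AliceWins.base (Finset.insert_nonempty _ _)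
          · refine IH _ _ (by omega) ?_ (Finset.insert_nonempty _ _) (Or.inl ?_)
            · rw [Finset.disjoint_right]
              intro u hu
              have huB : u ∈ B := Finset.mem_of_mem_erase hu
              have hune : u ≠ c := Finset.ne_of_mem_erase hu
              simp only [Finset.mem_insert, Finset.mem_erase]
              push_neg
              exact ⟨hune, fun _ => Finset.disjoint_right.mp hdisj huB⟩
            · unfold goodA
              rw [hAcard, hBcard]
              have hcast1 : ((B.card - 1 : ℕ) : ℝ) = (B.card : ℝ) - 1 := by
                push_cast [Nat.cast_sub hB1]; ring
              rw [hcast1]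
              have : (0:ℝ) ≤ (((insert c (A.erase x)).filter
                  (fun y => ∀ c' ∈ B.erase c, c' < y)).card : ℝ) := by positivity
              linarith [hq]
        · rw [if_neg hlt, if_neg hlt]
          have hgt : x < c := lt_of_le_of_ne (not_lt.mp hlt) (Ne.symm hcx)
          have hxB : x ∉ B := Finset.disjoint_left.mp hdisj hxA
          have hxB' : x ∉ B.erase c := fun hm => hxB (Finset.mem_of_mem_erase hm)
          have hAcard : (A.erase x).card = A.card - 1 := Finset.card_erase_of_mem hxA
          have hBcard : (insert x (B.erase c)).card = B.card := by
            rw [Finset.card_insert_of_notMem hxB', Finset.card_erase_of_mem hc]; omega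
          have ha2 : 2 ≤ A.card := by
            by_contra hcon
            have ha1 : A.card = 1 := by omega
            have : (A.card : ℝ) ≤ phiR * (B.card : ℝ) := by
              rw [ha1]
              push_cast
              have hb' : (1:ℝ) ≤ (B.card : ℝ) := by exact_mod_cast hB1
              nlinarith [mul_nonneg (by linarith : (0:ℝ) ≤ phiR - 1)
                (by linarith : (0:ℝ) ≤ (B.card:ℝ) - 1)]
            linarith
          refine IH _ _ (by omega) ?_ ?_ (Or.inr ⟨x, ?_⟩)
          · rw [Finset.disjoint_left]
            intro u hu
            have huA : u ∈ A := Finset.mem_of_mem_erase hu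
            have hune : u ≠ x := Finset.ne_of_mem_erase hu
            simp only [Finset.mem_insert, Finset.mem_erase]
            push_neg
            exact ⟨hune, fun _ => Finset.disjoint_left.mp hdisj huA⟩
          · rw [← Finset.card_pos, hAcard]; omega
          · -- goodB with threshold x
            have hKe : (A.erase x).filter (fun y => y ≤ x) = ∅ := by
              rw [Finset.filter_eq_empty_iff]
              intro y hy
              have hyA : y ∈ A := Finset.mem_of_mem_erase hy
              have hyx : y ≠ x := Finset.ne_of_mem_erase hy
              have := A.min'_le y hyA
              rw [← hxdef] at this
              exact not_le.mpr (lt_of_le_of_ne this (Ne.symm hyx))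
            have hDge : 1 ≤ ((insert x (B.erase c)).filter (fun y => y ≤ x)).card := by
              refine Finset.card_pos.mpr ⟨x, ?_⟩
              exact Finset.mem_filter.mpr ⟨Finset.mem_insert_self _ _, le_refl x⟩
            rw [hKe, hAcard, hBcard]
            simp only [Finset.card_empty, Nat.cast_zero, add_zero]
            have hcast1 : ((A.card - 1 : ℕ) : ℝ) = (A.card : ℝ) - 1 := by
              push_cast [Nat.cast_sub hA1]; ring
            rw [hcast1]
            have hd : (1:ℝ) ≤ (((insert x (B.erase c)).filter (fun y => y ≤ x)).card : ℝ) := by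
              exact_mod_cast hDge
            linarith [hq2]
    · -- CASE B : goodB
      rcases hgood with h | hGB
      · exact absurd h hGA
      obtain ⟨t, ht⟩ := hGB
      set K := A.filter (fun y => y ≤ t) with hKdef
      set D := B.filter (fun y => y ≤ t) with hDdef
      set P := A.filter (fun y => t < y) with hPdef
      have hPne : P.Nonempty := by
        by_contra hPe
        apply hGA
        have hPe' : P = ∅ := Finset.not_nonempty_iff_eq_empty.mp hPe
        have hKA : K = A := by
          rw [hKdef]
          apply Finset.filter_true_of_mem
          intro y hy
          by_contra hyt
          have : y ∈ P := Finset.mem_filter.mpr ⟨hy, not_le.mp hyt⟩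
          rw [hPe'] at this; exact absurd this (Finset.notMem_empty y)
        have hdb : (D.card : ℝ) ≤ (B.card : ℝ) := by
          exact_mod_cast Finset.card_le_card (Finset.filter_subset _ _)
        rw [hKA] at ht
        unfold goodA
        have h0 : (0:ℝ) ≤ ((A.filter fun x => ∀ c ∈ B, c < x).card : ℝ) := by positivity
        nlinarith [ht, hφsq, hφ1, h0]
      set x := P.min' hPne with hxdef
      have hxP : x ∈ P := Finset.min'_mem _ _
      have hxA : x ∈ A := (Finset.mem_filter.mp hxP).1
      have hxt : t < x := (Finset.mem_filter.mp hxP).2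
      refine AliceWins.step hBne x hxA (fun c hc => ?_)
      have hcA : c ∉ A := Finset.disjoint_right.mp hdisj hc
      have hcx : c ≠ x := fun h => hcA (h ▸ hxA)
      have hKx : x ∉ K := by
        rw [hKdef]; simp only [Finset.mem_filter]; push_neg
        exact fun _ => hxt
      have hKerase : (A.erase x).filter (fun y => y ≤ t) = K := by
        rw [hKdef]
        ext y
        simp only [Finset.mem_filter, Finset.mem_erase]
        constructor
        · rintro ⟨⟨_, hyA⟩, hyt⟩; exact ⟨hyA, hyt⟩
        · rintro ⟨hyA, hyt⟩
          exact ⟨⟨fun h => (not_le.mpr hxt) (h ▸ hyt), hyA⟩, hyt⟩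
      by_cases hlt : c < x
      · rw [if_pos hlt, if_pos hlt]
        have hcA' : c ∉ A.erase x := fun hm => hcA (Finset.mem_of_mem_erase hm)
        have hAcard : (insert c (A.erase x)).card = A.card := by
          rw [Finset.card_insert_of_notMem hcA', Finset.card_erase_of_mem hxA]; omega
        have hBcard : (B.erase c).card = B.card - 1 := Finset.card_erase_of_mem hc
        rcases (B.erase c).eq_empty_or_nonempty with hB'e | hB'ne
        · rw [hB'e]; exact AliceWins.base (Finset.insert_nonempty _ _)
        refine IH _ _ (by omega) ?_ (Finset.insert_nonempty _ _) (Or.inr ⟨t, ?_⟩)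
        · rw [Finset.disjoint_right]
          intro u hu
          have huB : u ∈ B := Finset.mem_of_mem_erase hu
          have hune : u ≠ c := Finset.ne_of_mem_erase hu
          simp only [Finset.mem_insert, Finset.mem_erase]
          push_neg
          exact ⟨hune, fun _ => Finset.disjoint_right.mp hdisj huB⟩
        · -- goodB with threshold t for the capture child
          have hfilterA : (insert c (A.erase x)).filter (fun y => y ≤ t)
              = if c ≤ t then insert c K else K := by
            rw [Finset.filter_insert, hKerase]
          by_cases hct : c ≤ t
          · -- c is a "dead" card
            have hk' : ((insert c (A.erase x)).filter (fun y => y ≤ t)).card = K.card + 1 := by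
              rw [hfilterA, if_pos hct, Finset.card_insert_of_notMem (fun h =>
                hcA (Finset.mem_of_mem_filter _ h))]
            have hcD : c ∈ D := Finset.mem_filter.mpr ⟨hc, hct⟩
            have hD1 : 1 ≤ D.card := Finset.card_pos.mpr ⟨c, hcD⟩
            have hd' : (B.erase c).filter (fun y => y ≤ t) = D.erase c := by
              rw [hDdef]
              ext y
              simp only [Finset.mem_filter, Finset.mem_erase]
              tauto
            rw [hk', hAcard, hBcard, hd', Finset.card_erase_of_mem hcD]
            have hcast1 : ((B.card - 1 : ℕ) : ℝ) = (B.card : ℝ) - 1 := by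
              push_cast [Nat.cast_sub hB1]; ring
            have hcast2 : ((D.card - 1 : ℕ) : ℝ) = (D.card : ℝ) - 1 := by
              push_cast [Nat.cast_sub hD1]; ring
            rw [hcast1, hcast2]
            push_cast
            nlinarith [ht]
          · -- c is between t and x : plain capture
            have hk' : (insert c (A.erase x)).filter (fun y => y ≤ t) = K := by
              rw [hfilterA, if_neg hct]
            have hd' : (B.erase c).filter (fun y => y ≤ t) = D := by
              rw [hDdef]
              ext y
              simp only [Finset.mem_filter, Finset.mem_erase]
              constructor
              · rintro ⟨⟨_, hyB⟩, hyt⟩; exact ⟨hyB, hyt⟩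
              · rintro ⟨hyB, hyt⟩
                exact ⟨⟨fun h => hct (h ▸ hyt), hyB⟩, hyt⟩
            rw [hk', hAcard, hBcard, hd']
            have hcast1 : ((B.card - 1 : ℕ) : ℝ) = (B.card : ℝ) - 1 := by
              push_cast [Nat.cast_sub hB1]; ring
            rw [hcast1]
            nlinarith [ht, hφ1]
      · -- Bob's card beats x
        rw [if_neg hlt, if_neg hlt]
        have hgt : x < c := lt_of_le_of_ne (not_lt.mp hlt) (Ne.symm hcx)
        have hxB : x ∉ B := Finset.disjoint_left.mp hdisj hxA
        have hxB' : x ∉ B.erase c := fun hm => hxB (Finset.mem_of_mem_erase hm)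
        have hAcard : (A.erase x).card = A.card - 1 := Finset.card_erase_of_mem hxA
        have hBcard : (insert x (B.erase c)).card = B.card := by
          rw [Finset.card_insert_of_notMem hxB', Finset.card_erase_of_mem hc]; omega
        have hkA : K.card ≤ A.card - 1 := by
          have : K ⊆ A.erase x := by
            intro y hy
            exact Finset.mem_erase.mpr ⟨fun h => hKx (h ▸ hy),
              Finset.mem_of_mem_filter _ hy⟩
          have := Finset.card_le_card this
          omega
        have hcD : c ∉ D := by
          rw [hDdef]; simp only [Finset.mem_filter]; push_neg
          intro _; exact lt_trans hxt hgt
        have hdB : D.card ≤ B.card - 1 := by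
          have : D ⊆ B.erase c := Finset.subset_erase.mpr ⟨Finset.filter_subset _ _, hcD⟩
          have := Finset.card_le_card this
          rw [Finset.card_erase_of_mem hc] at this
          omega
        have ha2 : 2 ≤ A.card := by
          by_contra hcon
          have ha1 : A.card = 1 := by omega
          have hk0 : K.card = 0 := by omega
          have hdlt : (D.card : ℝ) ≤ (B.card : ℝ) - 1 := by
            have hx1 : ((B.card - 1 : ℕ) : ℝ) = (B.card : ℝ) - 1 := by
              push_cast [Nat.cast_sub hB1]; ring
            rw [← hx1]; exact_mod_cast hdB
          rw [hk0] at ht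
          push_cast at ht
          have hb1 : (1:ℝ) ≤ (B.card : ℝ) := by exact_mod_cast hB1
          rw [ha1] at ht
          push_cast at ht
          nlinarith [ht, hφ1]
        refine IH _ _ (by omega) ?_ ?_ (Or.inr ⟨x, ?_⟩)
        · rw [Finset.disjoint_left]
          intro u hu
          have huA : u ∈ A := Finset.mem_of_mem_erase hu
          have hune : u ≠ x := Finset.ne_of_mem_erase hu
          simp only [Finset.mem_insert, Finset.mem_erase]
          push_neg
          exact ⟨hune, fun _ => Finset.disjoint_left.mp hdisj huA⟩
        · rw [← Finset.card_pos, hAcard]; omega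
        · -- goodB with threshold x for the losing-battle child
          have hk'' : (A.erase x).filter (fun y => y ≤ x) = K := by
            rw [hKdef]
            ext y
            simp only [Finset.mem_filter, Finset.mem_erase]
            constructor
            · rintro ⟨⟨hyx, hyA⟩, hyx'⟩
              refine ⟨hyA, ?_⟩
              by_contra hyt
              have hyP : y ∈ P := Finset.mem_filter.mpr ⟨hyA, not_le.mp hyt⟩
              have := P.min'_le y hyP
              rw [← hxdef] at this
              exact hyx (le_antisymm hyx' this)
            · rintro ⟨hyA, hyt⟩
              exact ⟨⟨fun h => (not_le.mpr hxt) (h ▸ hyt), hyA⟩, le_trans hyt (le_of_lt hxt)⟩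
          have hxBf : x ∉ (B.erase c).filter (fun y => y ≤ x) := fun h =>
            hxB' (Finset.mem_of_mem_filter _ h)
          have hd'' : (insert x (B.erase c)).filter (fun y => y ≤ x)
              = insert x ((B.erase c).filter (fun y => y ≤ x)) := by
            rw [Finset.filter_insert, if_pos (le_refl x)]
          have hDsub : D ⊆ (B.erase c).filter (fun y => y ≤ x) := by
            intro y hy
            have hyB : y ∈ B := Finset.mem_of_mem_filter _ hy
            have hyt : y ≤ t := (Finset.mem_filter.mp hy).2
            refine Finset.mem_filter.mpr ⟨?_, le_trans hyt (le_of_lt hxt)⟩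
            exact Finset.mem_erase.mpr ⟨fun h => hcD (h ▸ hy), hyB⟩
          have hdge : D.card + 1 ≤ ((insert x (B.erase c)).filter (fun y => y ≤ x)).card := by
            rw [hd'', Finset.card_insert_of_notMem hxBf]
            have := Finset.card_le_card hDsub
            omega
          rw [hk'', hAcard, hBcard]
          have hcast1 : ((A.card - 1 : ℕ) : ℝ) = (A.card : ℝ) - 1 := by
            push_cast [Nat.cast_sub hA1]; ring
          rw [hcast1]
          have hdge' : (D.card : ℝ) + 1 ≤
              (((insert x (B.erase c)).filter (fun y => y ≤ x)).card : ℝ) := by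
            exact_mod_cast hdge
          linarith [ht]

theorem main_lemma_high_cards (A B : Finset ℤ) (hdisj : Disjoint A B)
    (hhigh : ∀ a ∈ A, ∀ b ∈ B, b < a)
    (h : (B.card : ℝ) < (1 + Real.sqrt 5) / 2 * A.card) :
    AliceWins A B := by
  have hAne : A.Nonempty := by
    rcases A.eq_empty_or_nonempty with hA | hA
    · exfalso
      subst hA
      simp only [Finset.card_empty, Nat.cast_zero, mul_zero] at h
      have : (0:ℝ) ≤ (B.card : ℝ) := by positivity
      linarith
    · exact hA
  apply key (A.card + B.card) A B le_rfl hdisj hAne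
  left
  unfold goodA
  have hfil : A.filter (fun x => ∀ c ∈ B, c < x) = A :=
    Finset.filter_true_of_mem (fun x hx c hc => hhigh x hx c hc)
  rw [hfil]
  have hph : phiR = (1 + Real.sqrt 5) / 2 := rfl
  rw [hph]
  linarith [h]
end

section
/- In the formal model of Peer Pressure (Monotonicity Lemma): if Alice has a winning strategy from position (A, B), and A' is at least as good as A while B' is at most as good as B (with A', B' disjoint and |A'| ≥ |A|, |B'| ≤ |B|), then Alice has a winning strategy from (A', B'). -/
/-- `AsGood C C'` : the hand `C` is at least as good as the hand `C'`, i.e. for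
every `k`, either the `k`-th highest card of `C` is at least the `k`-th highest
card of `C'`, or `C'` has fewer than `k` cards. -/
def AsGood (C C' : Finset ℤ) : Prop :=
  ∀ k : ℕ, k < C'.card →
    ((C'.sort (· ≤ ·)).reverse.getD k 0) ≤ ((C.sort (· ≤ ·)).reverse.getD k 0)




/-- number of elements of `X` exceeding `t` -/
def cntGT (X : Finset ℤ) (t : ℤ) : ℕ := (X.filter (fun z => t < z)).card

lemma cnt_le_card (X : Finset ℤ) (t : ℤ) : cntGT X t ≤ X.card :=
  Finset.card_le_card (Finset.filter_subset _ _)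

lemma cnt_lt_card {X : Finset ℤ} {x : ℤ} (hx : x ∈ X) : cntGT X x < X.card := by
  apply Finset.card_lt_card
  refine ⟨Finset.filter_subset _ _, fun hsub => ?_⟩
  have := hsub hx
  simp at this

lemma cnt_mono (X : Finset ℤ) {s t : ℤ} (h : s ≤ t) : cntGT X t ≤ cntGT X s := by
  apply Finset.card_le_card
  intro z hz
  simp only [Finset.mem_filter] at *
  exact ⟨hz.1, lt_of_le_of_lt h hz.2⟩

lemma cnt_strict {X : Finset ℤ} {x t : ℤ} (hx : x ∈ X) (h : t < x) :
    cntGT X x < cntGT X t := by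
  apply Finset.card_lt_card
  constructor
  · intro z hz
    simp only [Finset.mem_filter] at *
    exact ⟨hz.1, h.trans hz.2⟩
  · intro hsub
    have := hsub (by simp [Finset.mem_filter]; exact ⟨hx, h⟩)
    simp at this

lemma cnt_lt_imp {X : Finset ℤ} {s t : ℤ} (h : cntGT X s < cntGT X t) : t < s := by
  by_contra hc
  push_neg at hc
  exact absurd (cnt_mono X hc) (by omega)

lemma cnt_erase {X : Finset ℤ} {y : ℤ} (hy : y ∈ X) (t : ℤ) :
    cntGT X t = cntGT (X.erase y) t + (if t < y then 1 else 0) := by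
  unfold cntGT
  rw [Finset.filter_erase]
  by_cases h : t < y
  · rw [if_pos h, Finset.card_erase_of_mem (by simp [Finset.mem_filter]; exact ⟨hy, h⟩)]
    have : 0 < (X.filter (fun z => t < z)).card :=
      Finset.card_pos.2 ⟨y, by simp [Finset.mem_filter]; exact ⟨hy, h⟩⟩
    omega
  · rw [if_neg h, Finset.erase_eq_of_notMem (by simp [Finset.mem_filter]; intro _; omega)]
    omega

lemma cnt_insert {X : Finset ℤ} {y : ℤ} (hy : y ∉ X) (t : ℤ) :
    cntGT (insert y X) t = cntGT X t + (if t < y then 1 else 0) := by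
  unfold cntGT
  rw [Finset.filter_insert]
  by_cases h : t < y
  · rw [if_pos h, if_pos h, Finset.card_insert_of_notMem (by simp [Finset.mem_filter]; tauto)]
  · rw [if_neg h, if_neg h]; omega

lemma cnt_inj {X : Finset ℤ} {x y : ℤ} (hx : x ∈ X) (hy : y ∈ X)
    (h : cntGT X x = cntGT X y) : x = y := by
  rcases lt_trichotomy x y with h1 | h1 | h1
  · exact absurd (cnt_strict hy h1) (by omega)
  · exact h1
  · exact absurd (cnt_strict hx h1) (by omega)

lemma cnt_surj {X : Finset ℤ} {r : ℕ} (hr : r < X.card) : ∃ x ∈ X, cntGT X x = r := by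
  have hinj : Set.InjOn (cntGT X) X := fun x hx y hy h => cnt_inj hx hy h
  have hsub : X.image (cntGT X) ⊆ Finset.range X.card := by
    intro r' hr'
    simp only [Finset.mem_image] at hr'
    obtain ⟨x, hx, rfl⟩ := hr'
    exact Finset.mem_range.2 (cnt_lt_card hx)
  have hcard : (X.image (cntGT X)).card = X.card := Finset.card_image_of_injOn hinj
  have heq : X.image (cntGT X) = Finset.range X.card :=
    Finset.eq_of_subset_of_card_le hsub (by simp [hcard])
  have : r ∈ X.image (cntGT X) := heq ▸ Finset.mem_range.2 hr
  simpa using this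

lemma cnt_min {X : Finset ℤ} {b : ℤ} (hb : b ∈ X) (hmin : ∀ z ∈ X, b ≤ z) :
    cntGT X b + 1 = X.card := by
  have : X.filter (fun z => b < z) = X.erase b := by
    ext z
    simp only [Finset.mem_filter, Finset.mem_erase]
    constructor
    · rintro ⟨hz, hlt⟩; exact ⟨ne_of_gt hlt, hz⟩
    · rintro ⟨hne, hz⟩; exact ⟨hz, lt_of_le_of_ne (hmin z hz) (Ne.symm hne)⟩
  unfold cntGT
  rw [this, Finset.card_erase_of_mem hb]
  have : 0 < X.card := Finset.card_pos.2 ⟨b, hb⟩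
  omega

lemma cnt_below_min {X : Finset ℤ} {b t : ℤ} (hb : b ∈ X) (hmin : ∀ z ∈ X, b ≤ z)
    (ht : t < b) : cntGT X t = X.card := by
  unfold cntGT
  congr 1
  apply Finset.filter_true_of_mem
  intro z hz
  exact lt_of_lt_of_le ht (hmin z hz)

lemma sorted_countP (L : List ℤ) (hL : List.Pairwise (· < ·) L) :
    ∀ (i : ℕ) (hi : i < L.length),
      L.countP (fun z => decide (L.get ⟨i, hi⟩ < z)) = L.length - 1 - i := by
  induction L with
  | nil => intro i hi; simp at hi
  | cons c tl ih =>
    intro i hi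
    rcases i with _ | j
    · simp only [List.get]
      rw [List.countP_cons]
      have h1 : tl.countP (fun z => decide (c < z)) = tl.length := by
        rw [List.countP_eq_length]
        intro z hz
        simpa using (List.rel_of_pairwise_cons hL (a' := z) hz)
      simp [h1]
    · have hj : j < tl.length := by simpa using hi
      rw [List.countP_cons]
      have : (c :: tl : List ℤ).get ⟨j+1, hi⟩ = tl.get ⟨j, hj⟩ := rfl
      rw [this]
      have hc : c < tl.get ⟨j, hj⟩ := List.rel_of_pairwise_cons hL (tl.get_mem _)
      have : ¬ (tl.get ⟨j, hj⟩ < c) := by omega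
      simp only [this, decide_false, decide_eq_true_eq]
      rw [ih hL.of_cons j hj]
      simp
      omega

lemma cnt_eq_countP (X : Finset ℤ) (t : ℤ) :
    cntGT X t = (X.sort (·≤·)).countP (fun z => decide (t < z)) := by
  unfold cntGT
  have h1 : (X.filter (fun z => t < z)).card = Multiset.countP (fun z => t < z) X.val := by
    rw [Finset.card, Finset.filter_val, Multiset.countP_eq_card_filter]
  rw [h1, ← Finset.sort_eq X (·≤·), Multiset.coe_countP]

lemma getD_rank {X : Finset ℤ} {x : ℤ} (hx : x ∈ X) :
    ((X.sort (·≤·)).reverse).getD (cntGT X x) 0 = x := by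
  set L := X.sort (·≤·) with hLdef
  have hlen : L.length = X.card := Finset.length_sort _
  have hmemL : x ∈ L := (Finset.mem_sort _).2 hx
  obtain ⟨⟨i, hi⟩, hgi⟩ := List.mem_iff_get.1 hmemL
  have hsorted : List.Pairwise (· < ·) L := (Finset.sortedLT_sort X).pairwise
  have hcnt : cntGT X (L.get ⟨i, hi⟩) = L.length - 1 - i := by
    rw [cnt_eq_countP]
    exact sorted_countP L hsorted i hi
  rw [hgi] at hcnt
  have hr : cntGT X x < L.reverse.length := by
    rw [List.length_reverse, hlen]; exact cnt_lt_card hx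
  rw [List.getD_eq_getElem _ _ hr, List.getElem_reverse]
  simp only [show L.length - 1 - cntGT X x = i from by omega]
  exact hgi

def PD (A B A' B' : Finset ℤ) : Prop :=
  A.card ≤ A'.card ∧ B'.card ≤ B.card ∧
  (∀ x ∈ A, ∀ x' ∈ A', cntGT A x = cntGT A' x' → cntGT B' x' ≤ cntGT B x) ∧
  (∀ y' ∈ B', ∀ y ∈ B, cntGT B' y' = cntGT B y → cntGT A y ≤ cntGT A' y')

lemma PD_II {A B A' B' : Finset ℤ} {a a' b b' : ℤ}
    (hdAB : Disjoint A B) (hd' : Disjoint A' B')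
    (hpd : PD A B A' B')
    (ha : a ∈ A) (ha' : a' ∈ A') (hb : b ∈ B) (hb' : b' ∈ B')
    (hk : cntGT A a = cntGT A' a') (hj : cntGT B b = cntGT B' b')
    (h1 : a' < b') (h2 : a < b) :
    PD (A.erase a) (insert a (B.erase b)) (A'.erase a') (insert a' (B'.erase b')) := by
  obtain ⟨hc1, hc2, hP2, hP3⟩ := hpd
  have haB : a ∉ B := Finset.disjoint_left.1 hdAB ha
  have ha'B' : a' ∉ B' := Finset.disjoint_left.1 hd' ha'
  have haBe : a ∉ B.erase b := fun h => haB (Finset.mem_of_mem_erase h)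
  have ha'B'e : a' ∉ B'.erase b' := fun h => ha'B' (Finset.mem_of_mem_erase h)
  have hcA : 0 < A.card := Finset.card_pos.2 ⟨a, ha⟩
  have hcB : 0 < B.card := Finset.card_pos.2 ⟨b, hb⟩
  have hcB' : 0 < B'.card := Finset.card_pos.2 ⟨b', hb'⟩
  refine ⟨?_, ?_, ?_, ?_⟩
  · rw [Finset.card_erase_of_mem ha, Finset.card_erase_of_mem ha']; omega
  · rw [Finset.card_insert_of_notMem haBe, Finset.card_insert_of_notMem ha'B'e,
      Finset.card_erase_of_mem hb, Finset.card_erase_of_mem hb']; omega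
  · -- P2'
    intro x hx x' hx' hrank
    obtain ⟨hxa, hxA⟩ := Finset.mem_erase.1 hx
    obtain ⟨hx'a', hx'A'⟩ := Finset.mem_erase.1 hx'
    have hxB : x ∉ B := Finset.disjoint_left.1 hdAB hxA
    have hx'B' : x' ∉ B' := Finset.disjoint_left.1 hd' hx'A'
    have eA := cnt_erase ha x
    have eA' := cnt_erase ha' x'
    have eB := cnt_erase hb x
    have eB' := cnt_erase hb' x'
    have eIB := cnt_insert haBe x
    have eIB' := cnt_insert ha'B'e x'
    by_cases hq : x < a <;> by_cases hq' : x' < a'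
    · -- (t,t)
      simp only [if_pos hq] at eA eIB
      simp only [if_pos hq'] at eA' eIB'
      have hPx : cntGT B' x' ≤ cntGT B x := hP2 x hxA x' hx'A' (by omega)
      by_cases hp : x < b <;> by_cases hp' : x' < b'
      · simp only [if_pos hp] at eB; simp only [if_pos hp'] at eB'; omega
      · simp only [if_pos hp] at eB; simp only [if_neg hp'] at eB'
        have hbx' : b' < x' := lt_of_le_of_ne (not_lt.1 hp') (fun h => hx'B' (h ▸ hb'))
        have F1 : cntGT B b < cntGT B x := cnt_strict hb hp
        have F2 : cntGT B' x' ≤ cntGT B' b' := cnt_mono B' hbx'.le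
        omega
      · simp only [if_neg hp] at eB; simp only [if_pos hp'] at eB'; omega
      · simp only [if_neg hp] at eB; simp only [if_neg hp'] at eB'; omega
    · -- (t,f) vacuous
      simp only [if_pos hq] at eA; simp only [if_neg hq'] at eA'
      have ha'x' : a' < x' := lt_of_le_of_ne (not_lt.1 hq') (Ne.symm hx'a')
      have F1 : cntGT A a < cntGT A x := cnt_strict ha hq
      have F2 : cntGT A' x' < cntGT A' a' := cnt_strict hx'A' ha'x'
      omega
    · -- (f,t) vacuous
      simp only [if_neg hq] at eA; simp only [if_pos hq'] at eA'
      have hax : a < x := lt_of_le_of_ne (not_lt.1 hq) (Ne.symm hxa)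
      have F1 : cntGT A x < cntGT A a := cnt_strict hxA hax
      have F2 : cntGT A' a' < cntGT A' x' := cnt_strict ha' hq'
      omega
    · -- (f,f)
      simp only [if_neg hq] at eA eIB
      simp only [if_neg hq'] at eA' eIB'
      have hPx : cntGT B' x' ≤ cntGT B x := hP2 x hxA x' hx'A' (by omega)
      by_cases hp : x < b <;> by_cases hp' : x' < b'
      · simp only [if_pos hp] at eB; simp only [if_pos hp'] at eB'; omega
      · simp only [if_pos hp] at eB; simp only [if_neg hp'] at eB'
        have hbx' : b' < x' := lt_of_le_of_ne (not_lt.1 hp') (fun h => hx'B' (h ▸ hb'))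
        have F1 : cntGT B b < cntGT B x := cnt_strict hb hp
        have F2 : cntGT B' x' ≤ cntGT B' b' := cnt_mono B' hbx'.le
        omega
      · simp only [if_neg hp] at eB; simp only [if_pos hp'] at eB'; omega
      · simp only [if_neg hp] at eB; simp only [if_neg hp'] at eB'; omega
  · -- P3'
    intro y' hy' y hy hrank
    rcases Finset.mem_insert.1 hy with hyeq | hyE
    · -- y = a
      subst hyeq
      have eAa := cnt_erase ha y
      simp only [if_neg (lt_irrefl y)] at eAa
      rcases Finset.mem_insert.1 hy' with hy'eq | hy'E
      · -- y' = a'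
        subst hy'eq
        have eA'a := cnt_erase ha' y'
        simp only [if_neg (lt_irrefl y')] at eA'a
        omega
      · -- y' ∈ B'.erase b'
        obtain ⟨hy'b', hy'B'⟩ := Finset.mem_erase.1 hy'E
        have hy'a' : y' ≠ a' := fun h => ha'B' (h ▸ hy'B')
        have E1 := cnt_insert haBe y
        simp only [if_neg (lt_irrefl y)] at E1
        have E2 := cnt_erase hb y
        simp only [if_pos h2] at E2
        have E3 := cnt_insert ha'B'e y'
        have E4 := cnt_erase hb' y'
        have eA'y := cnt_erase ha' y'
        by_cases hq' : y' < a'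
        · simp only [if_pos hq'] at E3 eA'y
          have F1 : cntGT A' a' < cntGT A' y' := cnt_strict ha' hq'
          omega
        · have ha'y' : a' < y' := lt_of_le_of_ne (not_lt.1 hq') (Ne.symm hy'a')
          simp only [if_neg hq'] at E3 eA'y
          have F1 : cntGT B' y' < cntGT B' a' := cnt_strict hy'B' ha'y'
          have F2 : cntGT B' a' ≤ cntGT B y := hP2 y ha a' ha' hk
          by_cases hp' : y' < b'
          · simp only [if_pos hp'] at E4; omega
          · have hb'y' : b' < y' := lt_of_le_of_ne (not_lt.1 hp') (Ne.symm hy'b')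
            simp only [if_neg hp'] at E4
            have F3 : cntGT B' y' < cntGT B' b' := cnt_strict hy'B' hb'y'
            have F4 : cntGT B' b' < cntGT B' a' := cnt_strict hb' h1
            omega
    · -- y ∈ B.erase b
      obtain ⟨hyb, hyB⟩ := Finset.mem_erase.1 hyE
      have hya : y ≠ a := fun h => haB (h ▸ hyB)
      have E1 := cnt_insert haBe y
      have E2 := cnt_erase hb y
      have eAy := cnt_erase ha y
      rcases Finset.mem_insert.1 hy' with hy'eq | hy'E
      · -- y' = a'
        subst hy'eq
        have E3 := cnt_insert ha'B'e y'
        simp only [if_neg (lt_irrefl y')] at E3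
        have E4 := cnt_erase hb' y'
        simp only [if_pos h1] at E4
        have eA'a := cnt_erase ha' y'
        simp only [if_neg (lt_irrefl y')] at eA'a
        by_cases hq : y < a
        · have F1 : cntGT B a ≤ cntGT B y := cnt_mono B hq.le
          have F2 : cntGT B' y' ≤ cntGT B a := hP2 a ha y' ha' hk
          have hyb2 : y < b := hq.trans h2
          simp only [if_pos hq] at E1 eAy
          simp only [if_pos hyb2] at E2
          omega
        · have hay : a < y := lt_of_le_of_ne (not_lt.1 hq) (Ne.symm hya)
          have F1 : cntGT A y ≤ cntGT A a := cnt_mono A hay.le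
          simp only [if_neg hq] at eAy
          omega
      · -- y' ∈ B'.erase b'
        obtain ⟨hy'b', hy'B'⟩ := Finset.mem_erase.1 hy'E
        have hy'a' : y' ≠ a' := fun h => ha'B' (h ▸ hy'B')
        have E3 := cnt_insert ha'B'e y'
        have E4 := cnt_erase hb' y'
        have eA'y := cnt_erase ha' y'
        by_cases hq : y < a <;> by_cases hq' : y' < a'
        · -- (t,t)
          simp only [if_pos hq] at E1 eAy
          simp only [if_pos hq'] at E3 eA'y
          have hyb2 : y < b := hq.trans h2
          simp only [if_pos hyb2] at E2
          by_cases hp' : y' < b'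
          · simp only [if_pos hp'] at E4
            have heq : cntGT B' y' = cntGT B y := by omega
            have := hP3 y' hy'B' y hyB heq
            omega
          · have hb'y' : b' < y' := lt_of_le_of_ne (not_lt.1 hp') (Ne.symm hy'b')
            simp only [if_neg hp'] at E4
            have F1 : cntGT B b < cntGT B y := cnt_strict hb hyb2
            have F2 : cntGT B' y' < cntGT B' b' := cnt_strict hy'B' hb'y'
            omega
        · -- (t,f) vacuous
          have ha'y' : a' < y' := lt_of_le_of_ne (not_lt.1 hq') (Ne.symm hy'a')
          simp only [if_pos hq] at E1
          have hyb2 : y < b := hq.trans h2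
          simp only [if_pos hyb2] at E2
          simp only [if_neg hq'] at E3
          have G1 : cntGT B a ≤ cntGT B y := cnt_mono B hq.le
          have G2 : cntGT B' y' < cntGT B' a' := cnt_strict hy'B' ha'y'
          have G3 : cntGT B' a' ≤ cntGT B a := hP2 a ha a' ha' hk
          by_cases hp' : y' < b'
          · simp only [if_pos hp'] at E4; omega
          · simp only [if_neg hp'] at E4; omega
        · -- (f,t)
          have hay : a < y := lt_of_le_of_ne (not_lt.1 hq) (Ne.symm hya)
          have F1 : cntGT A y ≤ cntGT A a := cnt_mono A hay.le
          have F2 : cntGT A' a' < cntGT A' y' := cnt_strict ha' hq'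
          simp only [if_neg hq] at eAy
          simp only [if_pos hq'] at eA'y
          omega
        · -- (f,f)
          have hay : a < y := lt_of_le_of_ne (not_lt.1 hq) (Ne.symm hya)
          simp only [if_neg hq] at E1 eAy
          simp only [if_neg hq'] at E3 eA'y
          have hby : b ≠ y := hyb.symm
          by_cases hp : y < b <;> by_cases hp' : y' < b'
          · simp only [if_pos hp] at E2; simp only [if_pos hp'] at E4
            have heq : cntGT B' y' = cntGT B y := by omega
            have := hP3 y' hy'B' y hyB heq
            omega
          · simp only [if_pos hp] at E2; simp only [if_neg hp'] at E4
            have hb'y' : b' < y' := lt_of_le_of_ne (not_lt.1 hp') (Ne.symm hy'b')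
            have F1 : cntGT B b < cntGT B y := cnt_strict hb hp
            have F2 : cntGT B' y' < cntGT B' b' := cnt_strict hy'B' hb'y'
            omega
          · simp only [if_neg hp] at E2; simp only [if_pos hp'] at E4
            have hby2 : b < y := lt_of_le_of_ne (not_lt.1 hp) hby
            have F1 : cntGT B y < cntGT B b := cnt_strict hyB hby2
            have F2 : cntGT B' b' < cntGT B' y' := cnt_strict hb' hp'
            omega
          · simp only [if_neg hp] at E2; simp only [if_neg hp'] at E4
            have heq : cntGT B' y' = cntGT B y := by omega
            have := hP3 y' hy'B' y hyB heq
            omega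

lemma PD_Ia {A B A' B' : Finset ℤ} {a a' b b' : ℤ}
    (hdAB : Disjoint A B) (hd' : Disjoint A' B')
    (hpd : PD A B A' B')
    (ha : a ∈ A) (ha' : a' ∈ A') (hb : b ∈ B) (hb' : b' ∈ B')
    (hk : cntGT A a = cntGT A' a') (hmin : ∀ z ∈ B, b ≤ z)
    (h1 : b' < a') (h2 : b < a) :
    PD (insert b (A.erase a)) (B.erase b) (insert b' (A'.erase a')) (B'.erase b') := by
  obtain ⟨hc1, hc2, hP2, hP3⟩ := hpd
  have hbA : b ∉ A := fun h => Finset.disjoint_left.1 hdAB h hb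
  have hb'A' : b' ∉ A' := fun h => Finset.disjoint_left.1 hd' h hb'
  have hbAe : b ∉ A.erase a := fun h => hbA (Finset.mem_of_mem_erase h)
  have hb'A'e : b' ∉ A'.erase a' := fun h => hb'A' (Finset.mem_of_mem_erase h)
  have hcA : 0 < A.card := Finset.card_pos.2 ⟨a, ha⟩
  have hcB : 0 < B.card := Finset.card_pos.2 ⟨b, hb⟩
  have hcB' : 0 < B'.card := Finset.card_pos.2 ⟨b', hb'⟩
  have hcBe : (B.erase b).card = B.card - 1 := Finset.card_erase_of_mem hb
  have hcB'e : (B'.erase b').card = B'.card - 1 := Finset.card_erase_of_mem hb'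
  refine ⟨?_, ?_, ?_, ?_⟩
  · rw [Finset.card_insert_of_notMem hbAe, Finset.card_insert_of_notMem hb'A'e,
      Finset.card_erase_of_mem ha, Finset.card_erase_of_mem ha']; omega
  · omega
  · -- P2'
    intro x hx x' hx' hrank
    have hbound : cntGT (B'.erase b') x' ≤ B'.card - 1 := hcB'e ▸ cnt_le_card _ x'
    rcases Finset.mem_insert.1 hx with hxeq | hxE
    · -- x = b : trivial bound
      subst hxeq
      have e1 : cntGT B x = cntGT (B.erase x) x + (if x < x then 1 else 0) := cnt_erase hb x
      simp only [if_neg (lt_irrefl x)] at e1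
      have e2 : cntGT B x + 1 = B.card := cnt_min hb hmin
      omega
    · obtain ⟨hxa, hxA⟩ := Finset.mem_erase.1 hxE
      have hxB : x ∉ B := Finset.disjoint_left.1 hdAB hxA
      have eBx := cnt_erase hb x
      by_cases hp : x < b
      · -- trivial bound
        simp only [if_pos hp] at eBx
        have e2 : cntGT B x = B.card := cnt_below_min hb hmin hp
        omega
      · have hbx : b < x := lt_of_le_of_ne (not_lt.1 hp) (fun h => hxB (h ▸ hb))
        simp only [if_neg hp] at eBx
        -- cntGT (B.erase b) x = cntGT B x
        have eIA := cnt_insert hbAe x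
        simp only [if_neg hp] at eIA
        have eAx := cnt_erase ha x
        rw [eIA] at hrank
        rcases Finset.mem_insert.1 hx' with hx'eq | hx'E
        · -- x' = b' : contradiction route
          subst hx'eq
          have eIA' := cnt_insert hb'A'e x'
          simp only [if_neg (lt_irrefl x')] at eIA'
          have eA'b := cnt_erase ha' x'
          simp only [if_pos h1] at eA'b
          rw [eIA'] at hrank
          have eB'b := cnt_erase hb' x'
          simp only [if_neg (lt_irrefl x')] at eB'b
          by_contra hcon
          push_neg at hcon
          -- cntGT B x < cntGT (B'.erase b') x' = cntGT B' x'
          have hc'lt : cntGT B' x' < B'.card := cnt_lt_card hb'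
          obtain ⟨y₂, hy₂, hy₂r⟩ := cnt_surj (show cntGT B' x' < B.card by omega)
          have hPy := hP3 x' hb' y₂ hy₂ hy₂r.symm
          have hy₂x : y₂ < x := cnt_lt_imp (show cntGT B x < cntGT B y₂ by omega)
          have F1 : cntGT A x < cntGT A y₂ := cnt_strict hxA hy₂x
          by_cases hq : x < a
          · simp only [if_pos hq] at eAx; omega
          · have hax : a < x := lt_of_le_of_ne (not_lt.1 hq) (Ne.symm hxa)
            simp only [if_neg hq] at eAx
            have F2 : cntGT A x < cntGT A a := cnt_strict hxA hax
            have F3 : cntGT A' a' < cntGT A' x' := cnt_strict ha' h1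
            omega
        · obtain ⟨hx'a', hx'A'⟩ := Finset.mem_erase.1 hx'E
          have hx'B' : x' ∉ B' := Finset.disjoint_left.1 hd' hx'A'
          have eIA' := cnt_insert hb'A'e x'
          have eA'x := cnt_erase ha' x'
          have eB'x := cnt_erase hb' x'
          rw [eIA'] at hrank
          by_cases hp' : x' < b'
          · have hq' : x' < a' := hp'.trans h1
            simp only [if_pos hp'] at hrank eB'x
            simp only [if_pos hq'] at eA'x
            by_cases hq : x < a
            · simp only [if_pos hq] at eAx
              obtain ⟨x₂', hx₂', hx₂r⟩ := cnt_surj (show cntGT A x < A'.card from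
                lt_of_lt_of_le (cnt_lt_card hxA) hc1)
              have hPx := hP2 x hxA x₂' hx₂' hx₂r.symm
              have hlt : x₂' < x' := cnt_lt_imp (show cntGT A' x' < cntGT A' x₂' by omega)
              have F1 : cntGT B' x' ≤ cntGT B' x₂' := cnt_mono B' hlt.le
              omega
            · simp only [if_neg hq] at eAx
              have hPx := hP2 x hxA x' hx'A' (by omega)
              omega
          · have hb'x' : b' < x' := lt_of_le_of_ne (not_lt.1 hp') (fun h => hx'B' (h ▸ hb'))
            simp only [if_neg hp'] at hrank eB'x
            by_cases hq : x < a <;> by_cases hq' : x' < a'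
            · simp only [if_pos hq] at eAx; simp only [if_pos hq'] at eA'x
              have hPx := hP2 x hxA x' hx'A' (by omega)
              omega
            · -- vacuous
              simp only [if_pos hq] at eAx; simp only [if_neg hq'] at eA'x
              have ha'x' : a' < x' := lt_of_le_of_ne (not_lt.1 hq') (Ne.symm hx'a')
              have F1 : cntGT A a < cntGT A x := cnt_strict ha hq
              have F2 : cntGT A' x' < cntGT A' a' := cnt_strict hx'A' ha'x'
              omega
            · -- vacuous
              simp only [if_neg hq] at eAx; simp only [if_pos hq'] at eA'x
              have hax : a < x := lt_of_le_of_ne (not_lt.1 hq) (Ne.symm hxa)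
              have F1 : cntGT A x < cntGT A a := cnt_strict hxA hax
              have F2 : cntGT A' a' < cntGT A' x' := cnt_strict ha' hq'
              omega
            · simp only [if_neg hq] at eAx; simp only [if_neg hq'] at eA'x
              have hPx := hP2 x hxA x' hx'A' (by omega)
              omega
  · -- P3'
    intro y' hy' y hy hrank
    obtain ⟨hyb, hyB⟩ := Finset.mem_erase.1 hy
    obtain ⟨hy'b', hy'B'⟩ := Finset.mem_erase.1 hy'
    have hyA : y ∉ A := Finset.disjoint_left.1 hdAB.symm hyB
    have hy'A' : y' ∉ A' := Finset.disjoint_left.1 hd'.symm hy'B'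
    have hby : b < y := lt_of_le_of_ne (hmin y hyB) (Ne.symm hyb)
    have eBy := cnt_erase hb y
    simp only [if_neg (not_lt.2 hby.le)] at eBy
    have eB'y := cnt_erase hb' y'
    have eIAy := cnt_insert hbAe y
    simp only [if_neg (not_lt.2 hby.le)] at eIAy
    have eIA'y := cnt_insert hb'A'e y'
    have eAy := cnt_erase ha y
    have eA'y := cnt_erase ha' y'
    by_cases hp' : y' < b'
    · have hq' : y' < a' := hp'.trans h1
      simp only [if_pos hp'] at eB'y eIA'y
      simp only [if_pos hq'] at eA'y
      obtain ⟨y₂, hy₂, hy₂r⟩ := cnt_surj (show cntGT B' y' < B.card from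
        lt_of_lt_of_le (cnt_lt_card hy'B') hc2)
      have hPy := hP3 y' hy'B' y₂ hy₂ hy₂r.symm
      have hy₂y : y₂ < y := cnt_lt_imp (show cntGT B y < cntGT B y₂ by omega)
      have F1 : cntGT A y ≤ cntGT A y₂ := cnt_mono A hy₂y.le
      by_cases hq : y < a
      · simp only [if_pos hq] at eAy; omega
      · simp only [if_neg hq] at eAy; omega
    · have hb'y' : b' < y' := lt_of_le_of_ne (not_lt.1 hp') (Ne.symm hy'b')
      simp only [if_neg hp'] at eB'y eIA'y
      have hPy := hP3 y' hy'B' y hyB (by omega)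
      by_cases hq : y < a <;> by_cases hq' : y' < a'
      · simp only [if_pos hq] at eAy; simp only [if_pos hq'] at eA'y; omega
      · simp only [if_pos hq] at eAy; simp only [if_neg hq'] at eA'y; omega
      · simp only [if_neg hq] at eAy; simp only [if_pos hq'] at eA'y
        have hay : a < y := lt_of_le_of_ne (not_lt.1 hq) (fun h => hyA (h ▸ ha))
        have F1 : cntGT A y ≤ cntGT A a := cnt_mono A hay.le
        have F2 : cntGT A' a' < cntGT A' y' := cnt_strict ha' hq'
        omega
      · simp only [if_neg hq] at eAy; simp only [if_neg hq'] at eA'y; omega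

lemma PD_Ib {A B A' B' : Finset ℤ} {a a' b b' : ℤ}
    (hdAB : Disjoint A B) (hd' : Disjoint A' B')
    (hpd : PD A B A' B')
    (ha : a ∈ A) (ha' : a' ∈ A') (hb : b ∈ B) (hb' : b' ∈ B')
    (hk : cntGT A a = cntGT A' a') (hmin : ∀ z ∈ B, b ≤ z)
    (h1 : b' < a') (h2 : a < b) :
    PD (A.erase a) (insert a (B.erase b)) (insert b' (A'.erase a')) (B'.erase b') := by
  obtain ⟨hc1, hc2, hP2, hP3⟩ := hpd
  have haB : a ∉ B := Finset.disjoint_left.1 hdAB ha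
  have hb'A' : b' ∉ A' := fun h => Finset.disjoint_left.1 hd' h hb'
  have haBe : a ∉ B.erase b := fun h => haB (Finset.mem_of_mem_erase h)
  have hb'A'e : b' ∉ A'.erase a' := fun h => hb'A' (Finset.mem_of_mem_erase h)
  have hcA : 0 < A.card := Finset.card_pos.2 ⟨a, ha⟩
  have hcB : 0 < B.card := Finset.card_pos.2 ⟨b, hb⟩
  have hcB' : 0 < B'.card := Finset.card_pos.2 ⟨b', hb'⟩
  have hcBe : (B.erase b).card = B.card - 1 := Finset.card_erase_of_mem hb
  have hcB'e : (B'.erase b').card = B'.card - 1 := Finset.card_erase_of_mem hb'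
  refine ⟨?_, ?_, ?_, ?_⟩
  · rw [Finset.card_erase_of_mem ha, Finset.card_insert_of_notMem hb'A'e,
      Finset.card_erase_of_mem ha']; omega
  · rw [Finset.card_insert_of_notMem haBe]; omega
  · -- P2'
    intro x hx x' hx' hrank
    obtain ⟨hxa, hxA⟩ := Finset.mem_erase.1 hx
    have hxB : x ∉ B := Finset.disjoint_left.1 hdAB hxA
    have hbound : cntGT (B'.erase b') x' ≤ B'.card - 1 := hcB'e ▸ cnt_le_card _ x'
    have eIB := cnt_insert haBe x
    have eBx := cnt_erase hb x
    by_cases hq : x < a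
    · -- trivial : x < a < b
      have hp : x < b := hq.trans h2
      simp only [if_pos hq] at eIB
      simp only [if_pos hp] at eBx
      have e2 : cntGT B x = B.card := cnt_below_min hb hmin hp
      omega
    · have hax : a < x := lt_of_le_of_ne (not_lt.1 hq) (Ne.symm hxa)
      simp only [if_neg hq] at eIB
      by_cases hp : x < b
      · simp only [if_pos hp] at eBx
        have e2 : cntGT B x = B.card := cnt_below_min hb hmin hp
        omega
      · simp only [if_neg hp] at eBx
        have eAx := cnt_erase ha x
        simp only [if_neg hq] at eAx
        rcases Finset.mem_insert.1 hx' with hx'eq | hx'E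
        · -- x' = b' : vacuous
          subst hx'eq
          have eIA' := cnt_insert hb'A'e x'
          simp only [if_neg (lt_irrefl x')] at eIA'
          have eA'b := cnt_erase ha' x'
          simp only [if_pos h1] at eA'b
          rw [eIA'] at hrank
          have F1 : cntGT A x < cntGT A a := cnt_strict hxA hax
          have F2 : cntGT A' a' < cntGT A' x' := cnt_strict ha' h1
          omega
        · obtain ⟨hx'a', hx'A'⟩ := Finset.mem_erase.1 hx'E
          have hx'B' : x' ∉ B' := Finset.disjoint_left.1 hd' hx'A'
          have eIA' := cnt_insert hb'A'e x'
          have eA'x := cnt_erase ha' x'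
          have eB'x := cnt_erase hb' x'
          rw [eIA'] at hrank
          by_cases hp' : x' < b'
          · have hq' : x' < a' := hp'.trans h1
            simp only [if_pos hp'] at hrank eB'x
            simp only [if_pos hq'] at eA'x
            have hPx := hP2 x hxA x' hx'A' (by omega)
            omega
          · have hb'x' : b' < x' := lt_of_le_of_ne (not_lt.1 hp') (fun h => hx'B' (h ▸ hb'))
            simp only [if_neg hp'] at hrank eB'x
            by_cases hq' : x' < a'
            · -- vacuous
              simp only [if_pos hq'] at eA'x
              have F1 : cntGT A x < cntGT A a := cnt_strict hxA hax
              have F2 : cntGT A' a' < cntGT A' x' := cnt_strict ha' hq'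
              omega
            · simp only [if_neg hq'] at eA'x
              have hPx := hP2 x hxA x' hx'A' (by omega)
              omega
  · -- P3'
    intro y' hy' y hy hrank
    obtain ⟨hy'b', hy'B'⟩ := Finset.mem_erase.1 hy'
    have hy'A' : y' ∉ A' := Finset.disjoint_left.1 hd'.symm hy'B'
    rcases Finset.mem_insert.1 hy with hyeq | hyE
    · -- y = a : vacuous (rank too large)
      subst hyeq
      have eIB := cnt_insert haBe y
      simp only [if_neg (lt_irrefl y)] at eIB
      have eBy := cnt_erase hb y
      simp only [if_pos h2] at eBy
      have e2 : cntGT B y = B.card := cnt_below_min hb hmin h2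
      have hbound : cntGT (B'.erase b') y' < B'.card - 1 := hcB'e ▸ cnt_lt_card hy'
      omega
    · obtain ⟨hyb, hyB⟩ := Finset.mem_erase.1 hyE
      have hyA : y ∉ A := Finset.disjoint_left.1 hdAB.symm hyB
      have hby : b < y := lt_of_le_of_ne (hmin y hyB) (Ne.symm hyb)
      have hay : a < y := h2.trans hby
      have eIB := cnt_insert haBe y
      simp only [if_neg (not_lt.2 hay.le)] at eIB
      have eBy := cnt_erase hb y
      simp only [if_neg (not_lt.2 hby.le)] at eBy
      have eB'y := cnt_erase hb' y'
      have eAy := cnt_erase ha y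
      simp only [if_neg (not_lt.2 hay.le)] at eAy
      have eIA' := cnt_insert hb'A'e y'
      have eA'y := cnt_erase ha' y'
      by_cases hp' : y' < b'
      · have hq' : y' < a' := hp'.trans h1
        simp only [if_pos hp'] at eB'y eIA'
        simp only [if_pos hq'] at eA'y
        obtain ⟨y₂, hy₂, hy₂r⟩ := cnt_surj (show cntGT B' y' < B.card from
          lt_of_lt_of_le (cnt_lt_card hy'B') hc2)
        have hPy := hP3 y' hy'B' y₂ hy₂ hy₂r.symm
        have hy₂y : y₂ < y := cnt_lt_imp (show cntGT B y < cntGT B y₂ by omega)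
        have F1 : cntGT A y ≤ cntGT A y₂ := cnt_mono A hy₂y.le
        omega
      · have hb'y' : b' < y' := lt_of_le_of_ne (not_lt.1 hp') (Ne.symm hy'b')
        simp only [if_neg hp'] at eB'y eIA'
        have hPy := hP3 y' hy'B' y hyB (by omega)
        by_cases hq' : y' < a'
        · simp only [if_pos hq'] at eA'y
          have F1 : cntGT A y ≤ cntGT A a := cnt_mono A hay.le
          have F2 : cntGT A' a' < cntGT A' y' := cnt_strict ha' hq'
          omega
        · simp only [if_neg hq'] at eA'y; omega

lemma asGood_pair {C C' : Finset ℤ} (h : AsGood C C') {x x' : ℤ}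
    (hx : x ∈ C) (hx' : x' ∈ C') (heq : cntGT C' x' = cntGT C x) : x' ≤ x := by
  have h1 := h (cntGT C' x') (cnt_lt_card hx')
  rwa [getD_rank hx', heq, getD_rank hx] at h1

lemma PD_of_asGood {A B A' B' : Finset ℤ} (hA : AsGood A' A) (hB : AsGood B B')
    (hcardA : A.card ≤ A'.card) (hcardB : B'.card ≤ B.card) : PD A B A' B' := by
  refine ⟨hcardA, hcardB, ?_, ?_⟩
  · intro x hx x' hx' heq
    have hxx' : x ≤ x' := asGood_pair hA hx' hx heq
    rcases Nat.eq_zero_or_pos (cntGT B' x') with h0 | hpos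
    · omega
    · obtain ⟨y', hy', hy'r⟩ := cnt_surj (show cntGT B' x' - 1 < B'.card from by
        have := cnt_le_card B' x'; omega)
      have hx'y' : x' < y' := cnt_lt_imp (show cntGT B' y' < cntGT B' x' by omega)
      obtain ⟨y, hy, hyr⟩ := cnt_surj (show cntGT B' x' - 1 < B.card from by
        have := cnt_le_card B' x'; omega)
      have hy'y : y' ≤ y := asGood_pair hB hy hy' (by omega)
      have hxy : x < y := lt_of_le_of_lt hxx' (lt_of_lt_of_le hx'y' hy'y)
      have := cnt_strict hy hxy
      omega
  · intro y' hy' y hy heq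
    have hy'y : y' ≤ y := asGood_pair hB hy hy' heq
    rcases Nat.eq_zero_or_pos (cntGT A y) with h0 | hpos
    · omega
    · obtain ⟨x, hx, hxr⟩ := cnt_surj (show cntGT A y - 1 < A.card from by
        have := cnt_le_card A y; omega)
      have hyx : y < x := cnt_lt_imp (show cntGT A x < cntGT A y by omega)
      obtain ⟨x', hx', hx'r⟩ := cnt_surj (show cntGT A y - 1 < A'.card from by
        have := cnt_le_card A y; omega)
      have hxx' : x ≤ x' := asGood_pair hA hx' hx (by omega)
      have hy'x' : y' < x' := lt_of_le_of_lt hy'y (lt_of_lt_of_le hyx hxx')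
      have := cnt_strict hx' hy'x'
      omega

lemma disj_succ_win {A B : Finset ℤ} (a b : ℤ) (hd : Disjoint A B) :
    Disjoint (insert b (A.erase a)) (B.erase b) := by
  rw [Finset.disjoint_left]
  intro z hz hz'
  rcases Finset.mem_insert.1 hz with rfl | hz2
  · exact (Finset.notMem_erase z B) hz'
  · exact Finset.disjoint_left.1 hd (Finset.mem_of_mem_erase hz2) (Finset.mem_of_mem_erase hz')

lemma disj_succ_lose {A B : Finset ℤ} (a b : ℤ) (hd : Disjoint A B) :
    Disjoint (A.erase a) (insert a (B.erase b)) := by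
  rw [Finset.disjoint_left]
  intro z hz hz'
  obtain ⟨hzne, hzA⟩ := Finset.mem_erase.1 hz
  rcases Finset.mem_insert.1 hz' with rfl | hz2
  · exact hzne rfl
  · exact Finset.disjoint_left.1 hd hzA (Finset.mem_of_mem_erase hz2)

lemma aliceWins_of_PD {A B : Finset ℤ} (hwin : AliceWins A B) :
    ∀ A' B' : Finset ℤ, Disjoint A B → Disjoint A' B' → PD A B A' B' → AliceWins A' B' := by
  induction hwin with
  | @base A hA =>
    intro A' B' _ _ hpd
    obtain ⟨hc1, hc2, -, -⟩ := hpd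
    have hB' : B' = ∅ := Finset.card_eq_zero.1 (by simpa using hc2)
    subst hB'
    exact AliceWins.base (Finset.card_pos.1 (lt_of_lt_of_le (Finset.card_pos.2 hA) hc1))
  | @step A B hB a ha h IH =>
    intro A' B' hd hd' hpd
    rcases Finset.eq_empty_or_nonempty B' with hBe' | hB'
    · subst hBe'
      exact AliceWins.base (Finset.card_pos.1 (lt_of_lt_of_le (Finset.card_pos.2 ⟨a, ha⟩) hpd.1))
    · obtain ⟨a', ha', hk'⟩ := cnt_surj (show cntGT A a < A'.card from
        lt_of_lt_of_le (cnt_lt_card ha) hpd.1)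
      have hk : cntGT A a = cntGT A' a' := hk'.symm
      refine AliceWins.step hB' a' ha' ?_
      intro b' hb'
      by_cases hba : b' < a'
      · -- Alice wins the trick in the primed game
        rw [if_pos hba, if_pos hba]
        have hbB : B.min' hB ∈ B := B.min'_mem hB
        have hmin : ∀ z ∈ B, B.min' hB ≤ z := fun z hz => B.min'_le z hz
        set b := B.min' hB with hbdef
        rcases Finset.eq_empty_or_nonempty (B'.erase b') with hE | hNE
        · rw [hE]
          exact AliceWins.base ⟨b', Finset.mem_insert_self b' _⟩
        · by_cases hab : b < a
          · -- sub-case Ia : original strategy also wins the trick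
            have ihb := IH b hbB
            rw [if_pos hab, if_pos hab] at ihb
            exact ihb _ _ (disj_succ_win a b hd) (disj_succ_win a' b' hd')
              (PD_Ia hd hd' hpd ha ha' hbB hb' hk hmin hba hab)
          · -- sub-case Ib : original loses the trick
            have hne : a ≠ b := fun hc => Finset.disjoint_left.1 hd ha (hc ▸ hbB)
            have hab' : a < b := lt_of_le_of_ne (not_lt.1 hab) hne
            have ihb := IH b hbB
            rw [if_neg hab, if_neg hab] at ihb
            exact ihb _ _ (disj_succ_lose a b hd) (disj_succ_win a' b' hd')
              (PD_Ib hd hd' hpd ha ha' hbB hb' hk hmin hba hab')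
      · -- case II : Bob's card beats a'
        rw [if_neg hba, if_neg hba]
        have hne : a' ≠ b' := fun hc => Finset.disjoint_left.1 hd' ha' (hc ▸ hb')
        have ha'b' : a' < b' := lt_of_le_of_ne (not_lt.1 hba) hne
        obtain ⟨b, hbB, hj⟩ := cnt_surj (show cntGT B' b' < B.card from
          lt_of_lt_of_le (cnt_lt_card hb') hpd.2.1)
        have h2 : a < b := by
          have F1 : cntGT B' b' < cntGT B' a' := cnt_strict hb' ha'b'
          have F2 : cntGT B' a' ≤ cntGT B a := hpd.2.2.1 a ha a' ha' hk
          exact cnt_lt_imp (show cntGT B b < cntGT B a by omega)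
        have ihb := IH b hbB
        rw [if_neg (not_lt.2 h2.le), if_neg (not_lt.2 h2.le)] at ihb
        exact ihb _ _ (disj_succ_lose a b hd) (disj_succ_lose a' b' hd')
          (PD_II hd hd' hpd ha ha' hbB hb' hk hj ha'b' h2)


theorem monotonicity_lemma (A B A' B' : Finset ℤ)
    (hdisj : Disjoint A B) (hdisj' : Disjoint A' B')
    (hwin : AliceWins A B)
    (hA : AsGood A' A) (hB : AsGood B B')
    (hcardA : A.card ≤ A'.card) (hcardB : B'.card ≤ B.card) :
    AliceWins A' B' :=
  aliceWins_of_PD hwin A' B' hdisj hdisj' (PD_of_asGood hA hB hcardA hcardB)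
end

section
/- In the formal model of Peer Pressure, if both players' hands are nonempty, have equal size, the total number of cards is at most 4, and Alice holds the highest card, then Alice has a winning strategy. -/
lemma win_play_high {A : Finset ℤ} {c a : ℤ} (ha : a ∈ A) (h : c < a) :
    AliceWins A {c} := by
  refine AliceWins.step ⟨c, by simp⟩ a ha ?_
  intro b hb
  simp only [Finset.mem_singleton] at hb; subst hb
  rw [if_pos h, if_pos h, Finset.erase_singleton]
  exact AliceWins.base ⟨b, Finset.mem_insert_self _ _⟩

lemma win11 {x y : ℤ} (h : y < x) : AliceWins {x} {y} :=
  win_play_high (Finset.mem_singleton_self x) h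

lemma win21' {x y c : ℤ} (hxy : x < y) (hyc : y < c) : AliceWins ({x, y} : Finset ℤ) {c} := by
  refine AliceWins.step ⟨c, by simp⟩ x (by simp) ?_
  intro b hb
  simp only [Finset.mem_singleton] at hb; subst hb
  have hnb : ¬ b < x := by omega
  rw [if_neg hnb, if_neg hnb, Finset.erase_singleton,
    Finset.erase_insert (by simp [hxy.ne])]
  simpa using win11 hxy

lemma win21 {x y c : ℤ} (hxy : x ≠ y) (hcx : c ≠ x) (hcy : c ≠ y) :
    AliceWins ({x, y} : Finset ℤ) {c} := by
  by_cases h1 : c < x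
  · exact win_play_high (by simp) h1
  by_cases h2 : c < y
  · exact win_play_high (by simp) h2
  have hx : x < c := by omega
  have hy : y < c := by omega
  rcases hxy.lt_or_gt with h | h
  · exact win21' h hy
  · rw [Finset.pair_comm]; exact win21' h hx

theorem equal_size_high_card_wins (A B : Finset ℤ) (hdisj : Disjoint A B)
    (hA : A.Nonempty) (hB : B.Nonempty) (hcard : A.card = B.card)
    (htotal : A.card + B.card ≤ 4)
    (hhigh : ∃ a ∈ A, ∀ b ∈ B, b < a) :
    AliceWins A B := by
  obtain ⟨a, haA, hb⟩ := hhigh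
  have hA1 : 1 ≤ A.card := hA.card_pos
  have hB1 : 1 ≤ B.card := hB.card_pos
  have hA2 : A.card ≤ 2 := by omega
  interval_cases hAc : A.card
  · -- card 1
    obtain ⟨x, hx⟩ := Finset.card_eq_one.1 hAc
    have hBc : B.card = 1 := by omega
    obtain ⟨y, hy⟩ := Finset.card_eq_one.1 hBc
    subst hx; subst hy
    simp only [Finset.mem_singleton] at haA; subst haA
    exact win11 (hb y (by simp))
  · -- card 2
    have hBc : B.card = 2 := by omega
    refine AliceWins.step hB a haA ?_
    intro b hbB
    have hba : b < a := hb b hbB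
    rw [if_pos hba, if_pos hba]
    obtain ⟨x, y, hxy, hAeq⟩ := Finset.card_eq_two.1 hAc
    -- B.erase b is a singleton
    have hcB : (B.erase b).card = 1 := by
      rw [Finset.card_erase_of_mem hbB, hBc]
    obtain ⟨c, hc⟩ := Finset.card_eq_one.1 hcB
    have hcmem : c ∈ B := Finset.mem_of_mem_erase (hc ▸ Finset.mem_singleton_self c)
    have hcb : c ≠ b := (Finset.mem_erase.1 (hc ▸ Finset.mem_singleton_self c)).1
    have hbnA : b ∉ A := fun h => absurd hbB (Finset.disjoint_left.1 hdisj h)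
    have hcnA : c ∉ A := fun h => absurd hcmem (Finset.disjoint_left.1 hdisj h)
    rw [hc]
    subst hAeq
    simp only [Finset.mem_insert, Finset.mem_singleton] at haA
    simp only [Finset.mem_insert, Finset.mem_singleton, not_or] at hbnA hcnA
    rcases haA with rfl | rfl
    · rw [Finset.erase_insert (by simp [hxy])]
      exact win21 hbnA.2 hcb hcnA.2
    · rw [Finset.pair_comm, Finset.erase_insert (by simp [hxy.symm])]
      exact win21 hbnA.1 hcb hcnA.1
end
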